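/- Let μ1, μ2 ∈ [0,1] and δ > 0 be such that 0 < μ2 + δ < μ1. There exists λ0 = λ0(μ1, μ2, δ) > 1 such that for every λ ∈ (1, λ0) there exist constants C > 0 and d > 0 (depending on λ, μ1, μ2, δ) with the following property: for every positive integer j and every real x ≥ 1, if X is a Binomial(j, μ1) random variable then E[(1 − F^Bin_{j+1, μ2+δ}(X))^x] ≤ α^x + C · exp(−j d)/x^λ, where α = (1/2)^{1−μ2−δ}. -/

import Mathlib

open Real

/-- The Binomial CDF `F^Bin_{n,p}(k) = Σ_{m=0}^{k} C(n,m) p^m (1−p)^{n−m}`. -/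
noncomputable def binCdf (n : ℕ) (p : ℝ) (k : ℕ) : ℝ :=
  ∑ m ∈ Finset.range (k + 1), (n.choose m : ℝ) * p ^ m * (1 - p) ^ (n - m)

lemma pmf_sum_eq_one (n : ℕ) (p : ℝ) :
    ∑ m ∈ Finset.range (n + 1), (n.choose m : ℝ) * p ^ m * (1 - p) ^ (n - m) = 1 := by
  have h := add_pow p (1 - p) n
  simp only [add_sub_cancel, one_pow] at h
  have h2 : ∑ m ∈ Finset.range (n + 1), (n.choose m : ℝ) * p ^ m * (1 - p) ^ (n - m)
      = ∑ m ∈ Finset.range (n + 1), p ^ m * (1 - p) ^ (n - m) * (n.choose m : ℝ) :=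
    Finset.sum_congr rfl fun m _ => by ring
  rw [h2, ← h]

lemma chernoff_mul (n s : ℕ) (p r : ℝ) (hp0 : 0 ≤ p) (hp1 : p ≤ 1) (hr : 1 ≤ r)
    (hs : s ≤ n) :
    (1 - binCdf n p s) * r ^ (s + 1) ≤ (1 - p + p * r) ^ n := by
  have hq0 : (0:ℝ) ≤ 1 - p := by linarith
  have hr0 : (0:ℝ) ≤ r := by linarith
  have hsplit : binCdf n p s
      + ∑ m ∈ Finset.Ico (s + 1) (n + 1), (n.choose m : ℝ) * p ^ m * (1 - p) ^ (n - m) = 1 := by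
    rw [binCdf, Finset.sum_range_add_sum_Ico _ (by omega : s + 1 ≤ n + 1), pmf_sum_eq_one]
  have h1 : 1 - binCdf n p s
      = ∑ m ∈ Finset.Ico (s + 1) (n + 1), (n.choose m : ℝ) * p ^ m * (1 - p) ^ (n - m) := by
    linarith
  rw [h1, Finset.sum_mul]
  have hstep : ∀ m ∈ Finset.Ico (s + 1) (n + 1),
      (n.choose m : ℝ) * p ^ m * (1 - p) ^ (n - m) * r ^ (s + 1)
        ≤ (n.choose m : ℝ) * (p * r) ^ m * (1 - p) ^ (n - m) := by
    intro m hm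
    rw [Finset.mem_Ico] at hm
    have hrm : r ^ (s + 1) ≤ r ^ m := pow_le_pow_right₀ hr hm.1
    have h3 : (n.choose m : ℝ) * p ^ m * (1 - p) ^ (n - m) * r ^ (s + 1)
        ≤ (n.choose m : ℝ) * p ^ m * (1 - p) ^ (n - m) * r ^ m := by
      apply mul_le_mul_of_nonneg_left hrm
      positivity
    calc _ ≤ (n.choose m : ℝ) * p ^ m * (1 - p) ^ (n - m) * r ^ m := h3
      _ = (n.choose m : ℝ) * (p * r) ^ m * (1 - p) ^ (n - m) := by rw [mul_pow]; ring
  refine (Finset.sum_le_sum hstep).trans ?_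
  have hsub : ∑ m ∈ Finset.Ico (s + 1) (n + 1), (n.choose m : ℝ) * (p * r) ^ m * (1 - p) ^ (n - m)
      ≤ ∑ m ∈ Finset.range (n + 1), (n.choose m : ℝ) * (p * r) ^ m * (1 - p) ^ (n - m) := by
    apply Finset.sum_le_sum_of_subset_of_nonneg
    · intro m hm; rw [Finset.mem_Ico] at hm; exact Finset.mem_range.mpr hm.2
    · intro m _ _; positivity
  refine hsub.trans ?_
  have h := add_pow (p * r) (1 - p) n
  rw [show p * r + (1 - p) = 1 - p + p * r by ring] at h
  have h2 : ∑ m ∈ Finset.range (n + 1), (n.choose m : ℝ) * (p * r) ^ m * (1 - p) ^ (n - m)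
      = ∑ m ∈ Finset.range (n + 1), (p * r) ^ m * (1 - p) ^ (n - m) * (n.choose m : ℝ) :=
    Finset.sum_congr rfl fun m _ => by ring
  rw [h2, ← h]

lemma binCdf_pos (n : ℕ) (p : ℝ) (k : ℕ) (hp0 : 0 ≤ p) (hp1 : p < 1) : 0 < binCdf n p k := by
  have hq : (0:ℝ) < 1 - p := by linarith
  rw [binCdf]
  have h0 : (0:ℕ) ∈ Finset.range (k + 1) := by simp
  refine lt_of_lt_of_le ?_ (Finset.single_le_sum
    (f := fun m => (n.choose m : ℝ) * p ^ m * (1 - p) ^ (n - m)) (fun m _ => by positivity) h0)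
  simp only [Nat.choose_zero_right, Nat.cast_one, pow_zero, Nat.sub_zero, one_mul, mul_one]
  positivity

lemma binCdf_le_one (n : ℕ) (p : ℝ) (k : ℕ) (hp0 : 0 ≤ p) (hp1 : p ≤ 1) (hk : k ≤ n) :
    binCdf n p k ≤ 1 := by
  have h2 : binCdf n p k ≤ ∑ m ∈ Finset.range (n + 1), (n.choose m : ℝ) * p ^ m * (1 - p) ^ (n - m) := by
    rw [binCdf]
    apply Finset.sum_le_sum_of_subset_of_nonneg
    · exact Finset.range_subset_range.mpr (by omega)
    · intro m _ _
      have : (0:ℝ) ≤ 1 - p := by linarith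
      positivity
  exact h2.trans (le_of_eq (pmf_sum_eq_one n p))

lemma binCdf_ge_pmf (n : ℕ) (p : ℝ) (k : ℕ) (hp0 : 0 ≤ p) (hp1 : p ≤ 1) :
    (n.choose k : ℝ) * p ^ k * (1 - p) ^ (n - k) ≤ binCdf n p k := by
  rw [binCdf]
  have hq : (0:ℝ) ≤ 1 - p := by linarith
  exact Finset.single_le_sum
    (f := fun m => (n.choose m : ℝ) * p ^ m * (1 - p) ^ (n - m)) (fun m _ => by positivity)
    (by simp : k ∈ Finset.range (k + 1))

lemma one_sub_rpow_le (F x lam : ℝ) (hF0 : 0 < F) (hF1 : F ≤ 1) (hx : 1 ≤ x)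
    (hl0 : 0 ≤ lam) (hl2 : lam ≤ 2) :
    (1 - F) ^ x ≤ 5 * F ^ (-lam) * x ^ (-lam) := by
  have hx0 : (0:ℝ) < x := by linarith
  set t : ℝ := F * x with ht
  have ht0 : 0 < t := by positivity
  have h1 : (1 - F) ^ x ≤ Real.exp (-t) := by
    have hbase : 1 - F ≤ Real.exp (-F) := by
      have := Real.add_one_le_exp (-F); linarith
    calc (1 - F) ^ x ≤ (Real.exp (-F)) ^ x :=
          Real.rpow_le_rpow (by linarith) hbase (by linarith)
      _ = Real.exp (-F * x) := by rw [← Real.exp_mul]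
      _ = Real.exp (-t) := by rw [ht]; ring_nf
  have hq : t ^ lam ≤ t ^ (2:ℝ) + 1 := by
    rcases le_or_gt 1 t with h | h
    · have : t ^ lam ≤ t ^ (2:ℝ) := Real.rpow_le_rpow_of_exponent_le h hl2
      linarith [Real.rpow_nonneg (le_of_lt ht0) (2:ℝ)]
    · have : t ^ lam ≤ 1 := Real.rpow_le_one (le_of_lt ht0) (le_of_lt h) hl0
      have h2 : (0:ℝ) ≤ t ^ (2:ℝ) := Real.rpow_nonneg (le_of_lt ht0) 2
      linarith
  have hsq : t ^ (2:ℝ) = t * t := by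
    rw [show (2:ℝ) = ((2:ℕ):ℝ) by norm_num, Real.rpow_natCast]; ring
  have hquad : t * t ≤ 4 * Real.exp t := by
    have h2 : Real.exp (t/2) ≥ 1 + t/2 := by have := Real.add_one_le_exp (t/2); linarith
    have h4 : Real.exp (t/2) * Real.exp (t/2) = Real.exp t := by
      rw [← Real.exp_add]; ring_nf
    nlinarith [Real.exp_pos (t/2)]
  have hkey : t ^ lam * Real.exp (-t) ≤ 5 := by
    have hep : 0 < Real.exp t := Real.exp_pos t
    have he : Real.exp (-t) = (Real.exp t)⁻¹ := Real.exp_neg t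
    have h5 : (t ^ (2:ℝ) + 1) * Real.exp (-t) ≤ 5 := by
      rw [he, hsq, ← div_eq_mul_inv, div_le_iff₀ hep]
      have hone : (1:ℝ) ≤ Real.exp t := Real.one_le_exp (le_of_lt ht0)
      nlinarith
    calc t ^ lam * Real.exp (-t) ≤ (t ^ (2:ℝ) + 1) * Real.exp (-t) :=
          mul_le_mul_of_nonneg_right hq (le_of_lt (Real.exp_pos _))
      _ ≤ 5 := h5
  have hfin : Real.exp (-t) ≤ 5 * t ^ (-lam) := by
    have htl : 0 < t ^ lam := Real.rpow_pos_of_pos ht0 lam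
    rw [Real.rpow_neg (le_of_lt ht0), ← div_eq_mul_inv, le_div_iff₀ htl]
    calc Real.exp (-t) * t ^ lam = t ^ lam * Real.exp (-t) := by ring
      _ ≤ 5 := hkey
  calc (1 - F) ^ x ≤ Real.exp (-t) := h1
    _ ≤ 5 * t ^ (-lam) := hfin
    _ = 5 * F ^ (-lam) * x ^ (-lam) := by
        rw [ht, Real.mul_rpow (le_of_lt hF0) (le_of_lt hx0)]; ring

lemma pow_rpow_comm (a : ℝ) (ha : 0 ≤ a) (n : ℕ) (y : ℝ) : (a ^ n) ^ y = (a ^ y) ^ n := by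
  rw [← Real.rpow_natCast a n, ← Real.rpow_mul ha, mul_comm, Real.rpow_mul ha, Real.rpow_natCast]

lemma Tf_bound (j s : ℕ) (hs : s ≤ j) (p μ₁ lam : ℝ) (hp0 : 0 < p) (hp1 : p < 1)
    (hm0 : 0 < μ₁) (hm1 : μ₁ < 1) (hl : 1 ≤ lam) :
    (j.choose s : ℝ) * μ₁ ^ s * (1 - μ₁) ^ (j - s) * (binCdf (j + 1) p s) ^ (-lam)
      ≤ (1 - p) ^ (-lam) * (μ₁ * p ^ (-lam)) ^ s * ((1 - μ₁) * (1 - p) ^ (-lam)) ^ (j - s) := by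
  have hq0 : (0:ℝ) < 1 - p := by linarith
  set C₁ : ℝ := (((j+1).choose s : ℕ) : ℝ) with hC₁
  have hC₁1 : (1:ℝ) ≤ C₁ := by
    rw [hC₁]; exact_mod_cast Nat.succ_le_of_lt (Nat.choose_pos (by omega))
  have hC₁0 : (0:ℝ) < C₁ := by linarith
  have hP₁0 : (0:ℝ) < C₁ * p ^ s * (1 - p) ^ (j + 1 - s) := by positivity
  have hP₁F : C₁ * p ^ s * (1 - p) ^ (j + 1 - s) ≤ binCdf (j + 1) p s :=
    binCdf_ge_pmf (j+1) p s (le_of_lt hp0) (le_of_lt hp1)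
  have hmono : (binCdf (j + 1) p s) ^ (-lam)
      ≤ (C₁ * p ^ s * (1 - p) ^ (j + 1 - s)) ^ (-lam) :=
    Real.rpow_le_rpow_of_nonpos hP₁0 hP₁F (by linarith)
  have hq1 : (0:ℝ) ≤ 1 - μ₁ := by linarith
  have hT0 : (0:ℝ) ≤ (j.choose s : ℝ) * μ₁ ^ s * (1 - μ₁) ^ (j - s) :=
    mul_nonneg (mul_nonneg (by positivity) (by positivity)) (pow_nonneg hq1 _)
  have step1 : (j.choose s : ℝ) * μ₁ ^ s * (1 - μ₁) ^ (j - s) * (binCdf (j + 1) p s) ^ (-lam)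
      ≤ (j.choose s : ℝ) * μ₁ ^ s * (1 - μ₁) ^ (j - s)
        * (C₁ * p ^ s * (1 - p) ^ (j + 1 - s)) ^ (-lam) :=
    mul_le_mul_of_nonneg_left hmono hT0
  -- expand the rpow of the product
  have hexp : (C₁ * p ^ s * (1 - p) ^ (j + 1 - s)) ^ (-lam)
      = C₁ ^ (-lam) * (p ^ (-lam)) ^ s * (((1 - p) ^ (-lam)) ^ (j - s) * (1 - p) ^ (-lam)) := by
    rw [Real.mul_rpow (by positivity) (by positivity), Real.mul_rpow (by positivity) (by positivity)]
    rw [pow_rpow_comm p (le_of_lt hp0) s (-lam), pow_rpow_comm (1-p) (le_of_lt hq0) _ (-lam)]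
    rw [show j + 1 - s = (j - s) + 1 by omega, pow_succ]
  have hchoose : (j.choose s : ℝ) * C₁ ^ (-lam) ≤ 1 := by
    have h1 : C₁ ^ (-lam) ≤ C₁ ^ (-1:ℝ) :=
      Real.rpow_le_rpow_of_exponent_le hC₁1 (by linarith)
    have h2 : C₁ ^ (-1:ℝ) = C₁⁻¹ := Real.rpow_neg_one C₁
    have h3 : (j.choose s : ℝ) ≤ C₁ := by
      rw [hC₁]; exact_mod_cast Nat.choose_le_choose s (by omega : j ≤ j + 1)
    have h4 : (0:ℝ) ≤ (j.choose s : ℝ) := by positivity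
    calc (j.choose s : ℝ) * C₁ ^ (-lam) ≤ (j.choose s : ℝ) * C₁⁻¹ := by
          rw [← h2]; exact mul_le_mul_of_nonneg_left h1 h4
      _ ≤ C₁ * C₁⁻¹ := mul_le_mul_of_nonneg_right h3 (by positivity)
      _ = 1 := mul_inv_cancel₀ (ne_of_gt hC₁0)
  refine step1.trans ?_
  rw [hexp]
  have hrw : (j.choose s : ℝ) * μ₁ ^ s * (1 - μ₁) ^ (j - s)
        * (C₁ ^ (-lam) * (p ^ (-lam)) ^ s * (((1 - p) ^ (-lam)) ^ (j - s) * (1 - p) ^ (-lam)))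
      = ((j.choose s : ℝ) * C₁ ^ (-lam))
        * ((1 - p) ^ (-lam) * (μ₁ ^ s * (p ^ (-lam)) ^ s)
            * ((1 - μ₁) ^ (j - s) * ((1 - p) ^ (-lam)) ^ (j - s))) := by ring
  rw [hrw, ← mul_pow, ← mul_pow]
  have hrest : (0:ℝ) ≤ (1 - p) ^ (-lam) * (μ₁ * p ^ (-lam)) ^ s
      * ((1 - μ₁) * (1 - p) ^ (-lam)) ^ (j - s) :=
    mul_nonneg (by positivity) (pow_nonneg (mul_nonneg hq1 (by positivity)) _)
  calc ((j.choose s : ℝ) * C₁ ^ (-lam))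
        * ((1 - p) ^ (-lam) * (μ₁ * p ^ (-lam)) ^ s * ((1 - μ₁) * (1 - p) ^ (-lam)) ^ (j - s))
      ≤ 1 * ((1 - p) ^ (-lam) * (μ₁ * p ^ (-lam)) ^ s * ((1 - μ₁) * (1 - p) ^ (-lam)) ^ (j - s)) :=
        mul_le_mul_of_nonneg_right hchoose hrest
    _ = _ := one_mul _

set_option maxHeartbeats 2000000 in
/-- Lemma extracted from the proof of Lemma 3 of Agrawal–Goyal: if
`0 < μ₂ + δ < μ₁`, there is `λ₀ > 1` such that for every `λ ∈ (1, λ₀)` there are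
constants `C, d > 0` with
`E[(1 − F^Bin_{j+1, μ₂+δ}(X))^x] ≤ α^x + C exp(−j d)/x^λ` for all `j ≥ 1`, `x ≥ 1`,
where `X ∼ Binomial(j, μ₁)` and `α = (1/2)^{1−μ₂−δ}`. -/
theorem binomial_tail_power_bound (μ₁ μ₂ : ℝ) (hμ₁ : μ₁ ∈ Set.Icc (0 : ℝ) 1)
    (hμ₂ : μ₂ ∈ Set.Icc (0 : ℝ) 1) (δ : ℝ) (hδ : 0 < δ)
    (h0 : 0 < μ₂ + δ) (h1 : μ₂ + δ < μ₁) :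
    ∃ lam₀ : ℝ, 1 < lam₀ ∧
      ∀ lam : ℝ, 1 < lam → lam < lam₀ →
        ∃ C > (0 : ℝ), ∃ d > (0 : ℝ),
          ∀ j : ℕ, 0 < j → ∀ x : ℝ, 1 ≤ x →
            ∑ s ∈ Finset.range (j + 1),
                (j.choose s : ℝ) * μ₁ ^ s * (1 - μ₁) ^ (j - s) *
                  (1 - binCdf (j + 1) (μ₂ + δ) s) ^ x ≤
              (((1 : ℝ) / 2) ^ (1 - μ₂ - δ)) ^ x +
                C * Real.exp (-(j : ℝ) * d) / x ^ lam := by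
  classical
  obtain ⟨hm00, hm11⟩ := hμ₁
  set p : ℝ := μ₂ + δ with hpdef
  have hp0 : 0 < p := h0
  have hpm : p < μ₁ := h1
  have hp1 : p < 1 := lt_of_lt_of_le hpm hm11
  have hm0 : 0 < μ₁ := lt_trans hp0 hpm
  have hq0 : (0:ℝ) < 1 - p := by linarith
  have hexw : (1:ℝ) - μ₂ - δ = 1 - p := by rw [hpdef]; ring
  set A : ℝ := ((1:ℝ)/2) ^ ((1:ℝ) - μ₂ - δ) with hAdef
  have hA0 : 0 < A := Real.rpow_pos_of_pos (by norm_num) _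
  have hlogA : Real.log A = -((1 - p) * Real.log 2) := by
    rw [hAdef, Real.log_rpow (by norm_num : (0:ℝ) < 1/2), hexw]
    rw [show (1:ℝ)/2 = 2⁻¹ by norm_num, Real.log_inv]; ring
  clear_value p A
  rcases eq_or_lt_of_le hm11 with hm1 | hm1
  · -- case μ₁ = 1
    subst hm1
    refine ⟨2, by norm_num, fun lam hl1 hl2 => ⟨1, by norm_num, 1, by norm_num, fun j hj x hx => ?_⟩⟩
    have hx0 : (0:ℝ) < x := by linarith
    have hsum : ∑ s ∈ Finset.range (j + 1),
        (j.choose s : ℝ) * (1:ℝ) ^ s * (1 - 1) ^ (j - s) * (1 - binCdf (j + 1) p s) ^ x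
        = (1 - binCdf (j + 1) p j) ^ x := by
      rw [Finset.sum_eq_single_of_mem j (Finset.self_mem_range_succ j)]
      · norm_num
      · intro s hs hsj
        rw [Finset.mem_range] at hs
        have hzero : ((1:ℝ) - 1) ^ (j - s) = 0 := by
          rw [show (1:ℝ) - 1 = 0 by ring]
          exact zero_pow (by omega)
        rw [hzero]
        ring
    have hcdfj : binCdf (j + 1) p j = 1 - p ^ (j + 1) := by
      have h2 := pmf_sum_eq_one (j+1) p
      rw [Finset.sum_range_succ] at h2
      simp only [Nat.choose_self, Nat.cast_one, Nat.sub_self, pow_zero, one_mul, mul_one] at h2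
      rw [binCdf]
      linarith
    have hple : p ^ (j + 1) ≤ A := by
      have h2 : p ^ (j+1) ≤ p ^ 2 :=
        pow_le_pow_of_le_one (le_of_lt hp0) (le_of_lt hp1) (by omega)
      have h3 : p ^ 2 ≤ A := by
        have hlp : Real.log p ≤ p - 1 := Real.log_le_sub_one_of_pos hp0
        have hl2 : Real.log 2 ≤ 1 := by
          have := Real.log_le_sub_one_of_pos (by norm_num : (0:ℝ) < 2); linarith
        have hl2' : 0 < Real.log 2 := Real.log_pos (by norm_num)
        have hkey : 2 * Real.log p ≤ -((1 - p) * Real.log 2) := by nlinarith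
        calc p ^ 2 = Real.exp (Real.log (p ^ 2)) := (Real.exp_log (by positivity)).symm
          _ = Real.exp (2 * Real.log p) := by rw [Real.log_pow]; norm_num
          _ ≤ Real.exp (Real.log A) := Real.exp_le_exp.mpr (by rw [hlogA]; exact hkey)
          _ = A := Real.exp_log hA0
      linarith
    rw [hsum, hcdfj]
    have hGx : (1 - (1 - p ^ (j+1))) ^ x ≤ A ^ x := by
      have : (1:ℝ) - (1 - p ^ (j+1)) = p ^ (j+1) := by ring
      rw [this]
      exact Real.rpow_le_rpow (by positivity) hple (by linarith)
    have hpos : 0 < 1 * Real.exp (-(j:ℝ) * 1) / x ^ lam := by positivity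
    linarith
  · -- main case : μ₁ < 1
    have hq1 : (0:ℝ) < 1 - μ₁ := by linarith
    have hqq : 1 - μ₁ < 1 - p := by linarith
    set Lm : ℝ := Real.log μ₁ with hLm
    set Lp : ℝ := Real.log p with hLp
    set Lq : ℝ := Real.log (1 - p) with hLq
    set Lq1 : ℝ := Real.log (1 - μ₁) with hLq1
    have hLm0 : Lm < 0 := Real.log_neg hm0 hm1
    have hLp0 : Lp < 0 := Real.log_neg hp0 hp1
    have hLq0 : Lq < 0 := Real.log_neg hq0 (by linarith)
    have hLq10 : Lq1 < 0 := Real.log_neg hq1 (by linarith)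
    have hLpq : Lp < Lm := Real.log_lt_log hp0 hpm
    have hLqq : Lq1 < Lq := Real.log_lt_log hq1 hqq
    clear_value Lm Lp Lq Lq1
    set K₀ : ℝ := p * (Lp - Lm) + (1 - p) * (Lq - Lq1) with hK₀def
    clear_value K₀
    have hK₀ : 0 < K₀ := by
      have h2 : Lm - Lp < μ₁ / p - 1 := by
        have h3 := Real.log_lt_sub_one_of_pos (by positivity : (0:ℝ) < μ₁ / p)
          (by intro h; rw [div_eq_one_iff_eq (ne_of_gt hp0)] at h; linarith)
        rw [Real.log_div (ne_of_gt hm0) (ne_of_gt hp0)] at h3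
        rw [hLm, hLp]; exact h3
      have h2' : p * (Lm - Lp) < μ₁ - p := by
        have h3 := mul_lt_mul_of_pos_left h2 hp0
        have h4 : p * (μ₁ / p - 1) = μ₁ - p := by field_simp
        linarith
      have h4 : Lq1 - Lq ≤ (1 - μ₁) / (1 - p) - 1 := by
        have h5 := Real.log_le_sub_one_of_pos (by positivity : (0:ℝ) < (1 - μ₁) / (1 - p))
        rw [Real.log_div (ne_of_gt hq1) (ne_of_gt hq0)] at h5
        rw [hLq1, hLq]; exact h5
      have h4' : (1 - p) * (Lq1 - Lq) ≤ p - μ₁ := by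
        have h5 := mul_le_mul_of_nonneg_left h4 (le_of_lt hq0)
        have h6 : (1 - p) * ((1 - μ₁) / (1 - p) - 1) = p - μ₁ := by field_simp; ring
        linarith
      rw [hK₀def]; linarith
    set D : ℝ := (-Lm) + (-Lq1) + 2*(-Lp) + 2*(-Lq) + 1 with hDdef
    clear_value D
    have hD : 0 < D := by rw [hDdef]; linarith
    obtain ⟨ε, hε0, hε1, hε2⟩ : ∃ e : ℝ, 0 < e ∧ e ≤ (1 - p)/2 ∧ e ≤ K₀/(4*D) :=
      ⟨min ((1 - p)/2) (K₀/(4*D)), lt_min (by linarith) (by positivity),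
        min_le_left _ _, min_le_right _ _⟩
    set a : ℝ := p + ε with hadef
    clear_value a
    have hap : p < a := by rw [hadef]; linarith
    have ha1 : a < 1 := by rw [hadef]; linarith
    have ha0 : 0 < a := by linarith
    set lam₀ : ℝ := min (min 2 (1 + K₀/(4*D))) (Lq1 / Lq) with hlamdef
    clear_value lam₀
    have hLqq1 : 1 < Lq1 / Lq := by
      rw [show Lq1 / Lq = (-Lq1)/(-Lq) by ring]
      rw [lt_div_iff₀ (by linarith : (0:ℝ) < -Lq)]
      linarith
    have h1K : (1:ℝ) < 1 + K₀/(4*D) := by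
      have : (0:ℝ) < K₀/(4*D) := by positivity
      linarith
    refine ⟨lam₀, by rw [hlamdef]; exact lt_min (lt_min (by norm_num) h1K) hLqq1,
      fun lam hl1 hl2 => ?_⟩
    rw [hlamdef] at hl2
    have hlam2 : lam ≤ 2 := le_of_lt (lt_of_lt_of_le hl2 ((min_le_left _ _).trans (min_le_left _ _)))
    have hlamK : lam - 1 ≤ K₀/(4*D) := by
      have := lt_of_lt_of_le hl2 ((min_le_left _ _).trans (min_le_right _ _)); linarith
    have hlamq : Lq1 ≤ lam * Lq := by
      have h2 : lam ≤ Lq1 / Lq := le_of_lt (lt_of_lt_of_le hl2 (min_le_right _ _))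
      rwa [le_div_iff_of_neg hLq0] at h2
    have hlam0 : 0 < lam := by linarith
    -- r
    obtain ⟨r, hr1, hr2, hr3⟩ : ∃ r : ℝ, 1 < r ∧ r ≤ 2 ∧ r ≤ a / p :=
      ⟨min 2 (a / p), lt_min (by norm_num) ((one_lt_div hp0).mpr hap),
        min_le_left _ _, min_le_right _ _⟩
    have hpr : p * r ≤ a := by
      calc p * r ≤ p * (a / p) := mul_le_mul_of_nonneg_left hr3 (le_of_lt hp0)
        _ = a := by rw [mul_comm, div_mul_cancel₀ _ (ne_of_gt hp0)]
    have hlr : 0 < Real.log r := Real.log_pos hr1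
    have hlrlow : (r - 1)/r ≤ Real.log r := by
      have h2 := Real.log_le_sub_one_of_pos (by positivity : (0:ℝ) < r⁻¹)
      rw [Real.log_inv] at h2
      have h3 : r⁻¹ - 1 = -((r-1)/r) := by field_simp; ring
      rw [h3] at h2
      linarith
    set L : ℝ := Real.log (1 - p + p * r) with hLdef
    clear_value L
    have hpr1 : (1:ℝ) ≤ 1 - p + p * r := by
      have h := mul_nonneg (le_of_lt hp0) (by linarith : (0:ℝ) ≤ r - 1)
      linarith [h]
    have hL0 : 0 ≤ L := by rw [hLdef]; exact Real.log_nonneg hpr1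
    have hLle : L ≤ p * (r - 1) := by
      have := Real.log_le_sub_one_of_pos (by linarith : (0:ℝ) < 1 - p + p * r)
      rw [hLdef]; linarith
    have hkey1 : p * (r - 1) ≤ a * Real.log r := by
      have h2 : a * ((r-1)/r) ≤ a * Real.log r := mul_le_mul_of_nonneg_left hlrlow (le_of_lt ha0)
      have h3 : (p * r) * ((r-1)/r) ≤ a * ((r-1)/r) :=
        mul_le_mul_of_nonneg_right hpr (div_nonneg (by linarith) (by linarith))
      have h4 : (p * r) * ((r-1)/r) = p * (r - 1) := by field_simp
      linarith
    set B₀ : ℝ := (1 - p) * Real.log 2 / Real.log r with hB₀def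
    clear_value B₀
    have hB₀ : 0 ≤ B₀ := by
      rw [hB₀def]
      exact div_nonneg (mul_nonneg (by linarith) (le_of_lt (Real.log_pos (by norm_num))))
        (le_of_lt hlr)
    set c₀ : ℝ := a + B₀ with hc₀def
    clear_value c₀
    have hc₀ : 0 ≤ c₀ := by rw [hc₀def]; linarith
    -- u, v
    set u : ℝ := μ₁ * p ^ (-lam) with hudef
    set v : ℝ := (1 - μ₁) * (1 - p) ^ (-lam) with hvdef
    clear_value u v
    have hu0 : 0 < u := by rw [hudef]; positivity
    have hv0 : 0 < v := by rw [hvdef]; positivity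
    set lu : ℝ := Real.log u with hludef
    set lv : ℝ := Real.log v with hlvdef
    clear_value lu lv
    have hlueq : lu = Lm + (-lam) * Lp := by
      rw [hludef, hudef, Real.log_mul (ne_of_gt hm0) (by positivity), Real.log_rpow hp0,
        hLm, hLp]
    have hlveq : lv = Lq1 + (-lam) * Lq := by
      rw [hlvdef, hvdef, Real.log_mul (ne_of_gt hq1) (by positivity), Real.log_rpow hq0,
        hLq1, hLq]
    have hlu0 : 0 ≤ lu := by
      rw [hlueq]
      have h2 : (-lam) * Lp ≥ -Lp := by
        have f1 : 0 ≤ (lam - 1) * (-Lp) := mul_nonneg (by linarith) (by linarith)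
        linarith [f1]
      linarith
    have hlv0 : lv ≤ 0 := by rw [hlveq]; linarith
    -- key log inequality
    have hflog : a * lu + (1 - a) * lv ≤ -(K₀/2) := by
      rw [hlueq, hlveq, hadef]
      have hb : -(p*Lp + (1-p)*Lq) ≤ D := by
        have e1 : p * (-Lp) ≤ 1 * (-Lp) := mul_le_mul_of_nonneg_right (le_of_lt hp1) (by linarith)
        have e2 : (1-p) * (-Lq) ≤ 1 * (-Lq) := mul_le_mul_of_nonneg_right (by linarith) (by linarith)
        rw [hDdef]; linarith
      have hb0 : 0 ≤ -(p*Lp + (1-p)*Lq) := by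
        have f1 : 0 ≤ p * (-Lp) := mul_nonneg (le_of_lt hp0) (by linarith)
        have f2 : 0 ≤ (1-p) * (-Lq) := mul_nonneg (by linarith) (by linarith)
        linarith
      have t2 : (lam - 1) * (-(p*Lp + (1-p)*Lq)) ≤ (K₀/(4*D)) * D := by
        apply mul_le_mul hlamK hb hb0 (by positivity)
      have hb3 : Lm - Lq1 - lam*(Lp - Lq) ≤ D := by
        have e1 : lam * (-Lp) ≤ 2 * (-Lp) := mul_le_mul_of_nonneg_right hlam2 (by linarith)
        have e2 : lam * Lq ≤ 0 := mul_nonpos_of_nonneg_of_nonpos (le_of_lt hlam0) (le_of_lt hLq0)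
        rw [hDdef]; linarith
      have t3 : ε * (Lm - Lq1 - lam*(Lp - Lq)) ≤ (K₀/(4*D)) * D := by
        calc ε * (Lm - Lq1 - lam*(Lp - Lq)) ≤ ε * D := mul_le_mul_of_nonneg_left hb3 (le_of_lt hε0)
          _ ≤ (K₀/(4*D)) * D := mul_le_mul_of_nonneg_right hε2 (le_of_lt hD)
      have hDD : (K₀/(4*D)) * D = K₀/4 := by field_simp
      have hid : (p + ε) * (Lm + (-lam) * Lp) + (1 - (p + ε)) * (Lq1 + (-lam) * Lq)
          = -K₀ + (lam - 1) * (-(p*Lp + (1-p)*Lq)) + ε * (Lm - Lq1 - lam*(Lp - Lq)) := by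
        rw [hK₀def]; ring
      rw [hid]
      rw [hDD] at t2 t3
      linarith
    -- constants
    refine ⟨5 * (1 - p) ^ (-lam) * Real.exp (c₀ * (lu - lv)) * (1 + 4/K₀), by positivity,
      K₀/4, by positivity, fun j hj x hx => ?_⟩
    have hx0 : (0:ℝ) < x := by linarith
    have hxl : (0:ℝ) < x ^ lam := Real.rpow_pos_of_pos hx0 lam
    set T : ℕ → ℝ := fun s => (j.choose s : ℝ) * μ₁ ^ s * (1 - μ₁) ^ (j - s) with hTdef
    clear_value T
    have hT0 : ∀ s, 0 ≤ T s := fun s => by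
      simp only [hTdef]
      exact mul_nonneg (mul_nonneg (by positivity) (by positivity)) (pow_nonneg (by linarith) _)
    set G : ℕ → ℝ := fun s => 1 - binCdf (j+1) p s with hGdef
    clear_value G
    have hF0 : ∀ s, 0 < binCdf (j+1) p s := fun s => binCdf_pos _ _ _ (le_of_lt hp0) hp1
    have hG0 : ∀ s ∈ Finset.range (j+1), 0 ≤ G s := by
      intro s hs
      rw [Finset.mem_range] at hs
      have := binCdf_le_one (j+1) p s (le_of_lt hp0) (le_of_lt hp1) (by omega)
      simp only [hGdef]; linarith
    set Bd : ℝ := 5 * x ^ (-lam) * ((1 - p) ^ (-lam)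
        * Real.exp (-((j:ℝ) * (K₀/2)) + c₀ * (lu - lv))) with hBddef
    clear_value Bd
    have hsplit := Finset.sum_filter_add_sum_filter_not (Finset.range (j+1))
      (fun s => A * r ^ (s+1) < (1 - p + p * r) ^ (j+1))
      (fun s => T s * G s ^ x)
    -- good bound
    have hgood : ∑ s ∈ (Finset.range (j+1)).filter
        (fun s => ¬ (A * r ^ (s+1) < (1 - p + p * r) ^ (j+1))), T s * G s ^ x ≤ A ^ x := by
      have h2 : ∀ s ∈ (Finset.range (j+1)).filter
          (fun s => ¬ (A * r ^ (s+1) < (1 - p + p * r) ^ (j+1))), T s * G s ^ x ≤ T s * A ^ x := by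
        intro s hs
        rw [Finset.mem_filter] at hs
        obtain ⟨hs1, hs2⟩ := hs
        push_neg at hs2
        rw [Finset.mem_range] at hs1
        have hch := chernoff_mul (j+1) s p r (le_of_lt hp0) (le_of_lt hp1) (le_of_lt hr1) (by omega)
        have hrp : (0:ℝ) < r ^ (s+1) := by positivity
        have hGA : G s ≤ A := by
          simp only [hGdef]
          have h3 : (1 - binCdf (j+1) p s) * r ^ (s+1) ≤ A * r ^ (s+1) := le_trans hch hs2
          exact le_of_mul_le_mul_right h3 hrp
        have hGx : G s ^ x ≤ A ^ x :=
          Real.rpow_le_rpow (hG0 s (Finset.mem_range.mpr hs1)) hGA (by linarith)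
        exact mul_le_mul_of_nonneg_left hGx (hT0 s)
      refine (Finset.sum_le_sum h2).trans ?_
      rw [← Finset.sum_mul]
      have h3 : ∑ s ∈ (Finset.range (j+1)).filter
          (fun s => ¬ (A * r ^ (s+1) < (1 - p + p * r) ^ (j+1))), T s ≤ 1 := by
        have h4 : ∑ s ∈ (Finset.range (j+1)).filter
            (fun s => ¬ (A * r ^ (s+1) < (1 - p + p * r) ^ (j+1))), T s
            ≤ ∑ s ∈ Finset.range (j+1), T s :=
          Finset.sum_le_sum_of_subset_of_nonneg (Finset.filter_subset _ _)
            (fun s _ _ => hT0 s)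
        have h5 : ∑ s ∈ Finset.range (j+1), T s = 1 := by
          simp only [hTdef]; exact pmf_sum_eq_one j μ₁
        rw [h5] at h4
        exact h4
      have hAx : (0:ℝ) ≤ A ^ x := le_of_lt (Real.rpow_pos_of_pos hA0 x)
      calc (∑ s ∈ (Finset.range (j+1)).filter
            (fun s => ¬ (A * r ^ (s+1) < (1 - p + p * r) ^ (j+1))), T s) * A ^ x
          ≤ 1 * A ^ x := mul_le_mul_of_nonneg_right h3 hAx
        _ = A ^ x := one_mul _
    -- bad bound
    have hbad : ∑ s ∈ (Finset.range (j+1)).filter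
        (fun s => A * r ^ (s+1) < (1 - p + p * r) ^ (j+1)), T s * G s ^ x
        ≤ ((j:ℝ) + 1) * Bd := by
      have hBd0 : 0 ≤ Bd := by rw [hBddef]; positivity
      have h2 : ∀ s ∈ (Finset.range (j+1)).filter
          (fun s => A * r ^ (s+1) < (1 - p + p * r) ^ (j+1)), T s * G s ^ x ≤ Bd := by
        intro s hs
        rw [Finset.mem_filter, Finset.mem_range] at hs
        obtain ⟨hs1, hs2⟩ := hs
        have hsj : s ≤ j := by omega
        -- s ≤ j*a + c₀
        have hsle : (s:ℝ) ≤ (j:ℝ) * a + c₀ := by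
          have hlhs : (0:ℝ) < A * r ^ (s+1) := by positivity
          have h3 := Real.log_lt_log hlhs hs2
          rw [Real.log_mul (ne_of_gt hA0) (by positivity), Real.log_pow, Real.log_pow,
            hlogA, ← hLdef] at h3
          -- h3 : -((1-p)*log 2) + (s+1)*log r < (j+1)*L
          have h4 : ((s:ℝ)+1) * Real.log r < ((j:ℝ)+1) * (a * Real.log r) + (1-p)*Real.log 2 := by
            have h5 : ((j:ℝ)+1) * L ≤ ((j:ℝ)+1) * (a * Real.log r) := by
              apply mul_le_mul_of_nonneg_left _ (by positivity)
              linarith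
            push_cast at h3 ⊢
            linarith
          have h6 : (1-p)*Real.log 2 = B₀ * Real.log r := by
            rw [hB₀def]; field_simp
          rw [h6] at h4
          have h7 : ((s:ℝ)+1) * Real.log r < (((j:ℝ)+1) * a + B₀) * Real.log r := by
            have h7a : (((j:ℝ)+1) * a + B₀) * Real.log r
                = ((j:ℝ)+1) * (a * Real.log r) + B₀ * Real.log r := by ring
            linarith
          have h8 : (s:ℝ)+1 < ((j:ℝ)+1) * a + B₀ := lt_of_mul_lt_mul_right (by linarith) (le_of_lt hlr)
          rw [hc₀def]
          have h9 : ((j:ℝ)+1) * a = (j:ℝ)*a + a := by ring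
          linarith
        -- pointwise bound
        have hF1 : binCdf (j+1) p s ≤ 1 := binCdf_le_one (j+1) p s (le_of_lt hp0) (le_of_lt hp1) (by omega)
        have hstep1 : G s ^ x ≤ 5 * (binCdf (j+1) p s) ^ (-lam) * x ^ (-lam) := by
          simp only [hGdef]
          exact one_sub_rpow_le _ x lam (hF0 s) hF1 hx (le_of_lt hlam0) hlam2
        have hstep2 : T s * G s ^ x ≤ 5 * x ^ (-lam) * (T s * (binCdf (j+1) p s) ^ (-lam)) := by
          have := mul_le_mul_of_nonneg_left hstep1 (hT0 s)
          calc T s * G s ^ x ≤ T s * (5 * (binCdf (j+1) p s) ^ (-lam) * x ^ (-lam)) := this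
            _ = 5 * x ^ (-lam) * (T s * (binCdf (j+1) p s) ^ (-lam)) := by ring
        have hstep3 : T s * (binCdf (j+1) p s) ^ (-lam)
            ≤ (1 - p) ^ (-lam) * u ^ s * v ^ (j - s) := by
          simp only [hTdef, hudef, hvdef]
          exact Tf_bound j s hsj p μ₁ lam hp0 hp1 hm0 hm1 (le_of_lt hl1)
        have hstep4 : u ^ s * v ^ (j - s) ≤ Real.exp (-((j:ℝ) * (K₀/2)) + c₀ * (lu - lv)) := by
          have hue : u ^ s = Real.exp (lu * s) := by
            rw [hludef, ← Real.rpow_natCast u s, Real.rpow_def_of_pos hu0]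
          have hve : v ^ (j - s) = Real.exp (lv * ((j:ℝ) - s)) := by
            rw [hlvdef, ← Real.rpow_natCast v (j - s), Real.rpow_def_of_pos hv0,
              Nat.cast_sub hsj]
          rw [hue, hve, ← Real.exp_add]
          apply Real.exp_le_exp.mpr
          have e1 : lu * (s:ℝ) ≤ ((j:ℝ) * a + c₀) * lu := by
            rw [mul_comm]
            exact mul_le_mul_of_nonneg_right hsle hlu0
          have e2 : lv * ((j:ℝ) - s) ≤ ((j:ℝ) * (1 - a) - c₀) * lv := by
            rw [mul_comm]
            exact mul_le_mul_of_nonpos_right (by linarith) hlv0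
          have e3 : (j:ℝ) * (a * lu + (1 - a) * lv) ≤ (j:ℝ) * (-(K₀/2)) :=
            mul_le_mul_of_nonneg_left hflog (by positivity)
          have hid2 : ((j:ℝ) * a + c₀) * lu + ((j:ℝ) * (1 - a) - c₀) * lv
              = (j:ℝ) * (a * lu + (1 - a) * lv) + c₀ * (lu - lv) := by ring
          linarith
        calc T s * G s ^ x ≤ 5 * x ^ (-lam) * (T s * (binCdf (j+1) p s) ^ (-lam)) := hstep2
          _ ≤ 5 * x ^ (-lam) * ((1 - p) ^ (-lam) * u ^ s * v ^ (j - s)) := by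
              apply mul_le_mul_of_nonneg_left hstep3 (by positivity)
          _ ≤ 5 * x ^ (-lam) * ((1 - p) ^ (-lam)
              * Real.exp (-((j:ℝ) * (K₀/2)) + c₀ * (lu - lv))) := by
              apply mul_le_mul_of_nonneg_left _ (by positivity)
              rw [mul_assoc]
              exact mul_le_mul_of_nonneg_left hstep4 (by positivity)
          _ = Bd := by rw [hBddef]
      calc ∑ s ∈ (Finset.range (j+1)).filter
            (fun s => A * r ^ (s+1) < (1 - p + p * r) ^ (j+1)), T s * G s ^ x
          ≤ ((Finset.range (j+1)).filter
            (fun s => A * r ^ (s+1) < (1 - p + p * r) ^ (j+1))).card • Bd :=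
            Finset.sum_le_card_nsmul _ _ _ (fun s hs => h2 s hs)
        _ = (((Finset.range (j+1)).filter
            (fun s => A * r ^ (s+1) < (1 - p + p * r) ^ (j+1))).card : ℝ) * Bd := by
            rw [nsmul_eq_mul]
        _ ≤ ((j:ℝ) + 1) * Bd := by
            apply mul_le_mul_of_nonneg_right _ hBd0
            have := Finset.card_filter_le (Finset.range (j+1))
              (fun s => A * r ^ (s+1) < (1 - p + p * r) ^ (j+1))
            rw [Finset.card_range] at this
            exact_mod_cast this
    -- final assembly
    have hfinal : ((j:ℝ) + 1) * Bd
        ≤ 5 * (1 - p) ^ (-lam) * Real.exp (c₀ * (lu - lv)) * (1 + 4/K₀)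
          * Real.exp (-(j:ℝ) * (K₀/4)) / x ^ lam := by
      have hjK : ((j:ℝ) + 1) * Real.exp (-((j:ℝ) * (K₀/2)))
          ≤ (1 + 4/K₀) * Real.exp (-((j:ℝ) * (K₀/4))) := by
        have e1 : 1 + (j:ℝ) * (K₀/4) ≤ Real.exp ((j:ℝ) * (K₀/4)) := by
          have := Real.add_one_le_exp ((j:ℝ) * (K₀/4)); linarith
        have e4 : (4/K₀) * ((j:ℝ) * (K₀/4)) = (j:ℝ) := by field_simp
        have e5 : (1 + 4/K₀) * (1 + (j:ℝ)*(K₀/4))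
            = 1 + (j:ℝ)*(K₀/4) + 4/K₀ + (4/K₀) * ((j:ℝ)*(K₀/4)) := by ring
        have e6 : (1 + 4/K₀) * (1 + (j:ℝ)*(K₀/4)) ≤ (1 + 4/K₀) * Real.exp ((j:ℝ)*(K₀/4)) := by
          apply mul_le_mul_of_nonneg_left e1 (by positivity)
        have e7 : ((j:ℝ) + 1) ≤ (1 + 4/K₀) * Real.exp ((j:ℝ)*(K₀/4)) := by
          have e8 : (0:ℝ) ≤ 4/K₀ := by positivity
          have e9 : (0:ℝ) ≤ (j:ℝ)*(K₀/4) := by positivity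
          linarith
        have e10 : Real.exp ((j:ℝ)*(K₀/4)) * Real.exp (-((j:ℝ)*(K₀/2)))
            = Real.exp (-((j:ℝ)*(K₀/4))) := by
          rw [← Real.exp_add]; congr 1; ring
        calc ((j:ℝ) + 1) * Real.exp (-((j:ℝ) * (K₀/2)))
            ≤ ((1 + 4/K₀) * Real.exp ((j:ℝ)*(K₀/4))) * Real.exp (-((j:ℝ)*(K₀/2))) :=
              mul_le_mul_of_nonneg_right e7 (le_of_lt (Real.exp_pos _))
          _ = (1 + 4/K₀) * (Real.exp ((j:ℝ)*(K₀/4)) * Real.exp (-((j:ℝ)*(K₀/2)))) := by ring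
          _ = (1 + 4/K₀) * Real.exp (-((j:ℝ)*(K₀/4))) := by rw [e10]
      have hBsplit : Bd = 5 * x ^ (-lam) * (1 - p) ^ (-lam) * Real.exp (c₀ * (lu - lv))
          * Real.exp (-((j:ℝ) * (K₀/2))) := by
        rw [hBddef, Real.exp_add]
        ring
      have hxneg : x ^ (-lam) = (x ^ lam)⁻¹ := by
        rw [Real.rpow_neg (le_of_lt hx0)]
      rw [hBsplit, hxneg]
      rw [div_eq_mul_inv]
      have hfac : (0:ℝ) ≤ 5 * (1 - p) ^ (-lam) * Real.exp (c₀ * (lu - lv)) * (x ^ lam)⁻¹ := by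
        positivity
      calc ((j:ℝ) + 1) * (5 * (x ^ lam)⁻¹ * (1 - p) ^ (-lam) * Real.exp (c₀ * (lu - lv))
            * Real.exp (-((j:ℝ) * (K₀/2))))
          = (5 * (1 - p) ^ (-lam) * Real.exp (c₀ * (lu - lv)) * (x ^ lam)⁻¹)
            * (((j:ℝ) + 1) * Real.exp (-((j:ℝ) * (K₀/2)))) := by ring
        _ ≤ (5 * (1 - p) ^ (-lam) * Real.exp (c₀ * (lu - lv)) * (x ^ lam)⁻¹)
            * ((1 + 4/K₀) * Real.exp (-((j:ℝ)*(K₀/4)))) :=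
            mul_le_mul_of_nonneg_left hjK hfac
        _ = 5 * (1 - p) ^ (-lam) * Real.exp (c₀ * (lu - lv)) * (1 + 4/K₀)
            * Real.exp (-(j:ℝ) * (K₀/4)) * (x ^ lam)⁻¹ := by ring_nf
    -- combine
    have hsum2 : ∑ s ∈ Finset.range (j + 1), T s * G s ^ x ≤ A ^ x + ((j:ℝ)+1) * Bd := by
      rw [← hsplit]
      linarith
    calc ∑ s ∈ Finset.range (j + 1),
          (j.choose s : ℝ) * μ₁ ^ s * (1 - μ₁) ^ (j - s) * (1 - binCdf (j + 1) p s) ^ x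
        = ∑ s ∈ Finset.range (j + 1), T s * G s ^ x := by
          apply Finset.sum_congr rfl; intro s _; simp only [hTdef, hGdef]
      _ ≤ A ^ x + ((j:ℝ)+1) * Bd := hsum2
      _ ≤ A ^ x + 5 * (1 - p) ^ (-lam) * Real.exp (c₀ * (lu - lv)) * (1 + 4/K₀)
          * Real.exp (-(j:ℝ) * (K₀/4)) / x ^ lam := by linarith
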